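/- Let v and w be words with v > w lexicographically, and let i be the least index (zero-based) with v_i ≠ w_i (so v_i > w_i). If B̂(v) < B̂(w), then B̂(w) < B̂(σ^{i+1} w). Likewise, if B̂(v) ≤ B̂(w), then B̂(w) ≤ B̂(σ^{i+1} w). -/

import Mathlib

/-- The shift map iterated `k` times: `(shift k w) i = w (i + k)`,
so `shift k w = w_k w_{k+1} w_{k+2} …`. -/
def shift (k : ℕ) (w : ℕ → ℕ) : ℕ → ℕ := fun i => w (i + k)

/-- Strict lexicographic order on infinite words: `v < w` iff there is an index `i`
with `v j = w j` for all `j < i` and `v i < w i`. -/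
def LexLt (v w : ℕ → ℕ) : Prop := ∃ i, (∀ j < i, v j = w j) ∧ v i < w i

/-- Weak lexicographic order: `v ≤ w` iff `v < w` or `v = w`. -/
def LexLe (v w : ℕ → ℕ) : Prop := LexLt v w ∨ v = w

/-- A word is a bounded sequence of natural numbers. -/
def IsWord (w : ℕ → ℕ) : Prop := ∃ M, ∀ i, w i ≤ M

/-- `fword w β = ∑_{i ≥ 0} w_i β^{-(i+1)} = w_0/β + w_1/β² + …`. -/
noncomputable def fword (w : ℕ → ℕ) (β : ℝ) : ℝ := ∑' i : ℕ, (w i : ℝ) / β ^ (i + 1)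

open Classical in
/-- `B̂(w)`: zero for the zero word, and otherwise `inf {β > 1 : f_w(β) ≤ 1}`. -/
noncomputable def Bhat (w : ℕ → ℕ) : ℝ :=
  if w = fun _ => 0 then 0 else sInf {β : ℝ | 1 < β ∧ fword w β ≤ 1}

/-- `B̄(w) = sup_{j ≥ 0} B̂(σ^j w)`. -/
noncomputable def Bbar (w : ℕ → ℕ) : ℝ := ⨆ j : ℕ, Bhat (shift j w)

/-- The sequence `A_i` in the β-expansion of `β`: `A_0 = β`, `A_{i+1} = β (A_i - ⌊A_i⌋)`. -/
noncomputable def betaA (β : ℝ) : ℕ → ℝ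
  | 0 => β
  | i + 1 => β * (betaA β i - (⌊betaA β i⌋₊ : ℝ))

/-- The β-expansion of `β`: the word `a` with `a_i = ⌊A_i⌋`. -/
noncomputable def betaExp (β : ℝ) : ℕ → ℕ := fun i => ⌊betaA β i⌋₊

/-- The domain `W(β)` of the β-shift: all words `w` with `σ^k w < a` lexicographically
for every `k ≥ 0`, where `a` is the β-expansion of `β`. -/
def Wset (β : ℝ) : Set (ℕ → ℕ) :=
  {w | IsWord w ∧ ∀ k : ℕ, LexLt (shift k w) (betaExp β)}

/-- `π` is a permutation of `{1, …, n}` (viewed as a map `ℕ → ℕ`). -/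
def IsPerm (n : ℕ) (π : ℕ → ℕ) : Prop := Set.BijOn π (Set.Icc 1 n) (Set.Icc 1 n)

/-- The word `w` induces the permutation `π` of `{1, …, n}`: for all `1 ≤ i, j ≤ n`,
`π(i) < π(j)` iff `σ^{i-1} w < σ^{j-1} w` lexicographically. -/
def Induces (n : ℕ) (w : ℕ → ℕ) (π : ℕ → ℕ) : Prop :=
  ∀ i ∈ Set.Icc 1 n, ∀ j ∈ Set.Icc 1 n,
    (π i < π j ↔ LexLt (shift (i - 1) w) (shift (j - 1) w))

/-- `π ∈ Al(Σ_β)`: some word in `W(β)` induces `π`. -/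
def Allowed (β : ℝ) (n : ℕ) (π : ℕ → ℕ) : Prop := ∃ w ∈ Wset β, Induces n w π

/-- The shift-complexity `B(π) = inf {β > 1 : π ∈ Al(Σ_β)}`. -/
noncomputable def Bperm (n : ℕ) (π : ℕ → ℕ) : ℝ :=
  sInf {β : ℝ | 1 < β ∧ Allowed β n π}

/-- `ρ_m` is the permutation `1 m 2 (m-1) 3 (m-2) …` of `{1, …, m}`:
`ρ(2i-1) = i` and `ρ(2i) = m+1-i`. -/
def IsRho (m : ℕ) (ρ : ℕ → ℕ) : Prop :=
  IsPerm m ρ ∧ (∀ i, 1 ≤ i → 2 * i - 1 ≤ m → ρ (2 * i - 1) = i) ∧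
    (∀ i, 1 ≤ i → 2 * i ≤ m → ρ (2 * i) = m + 1 - i)

open Filter Topology

lemma isWord_shift {w : ℕ → ℕ} (h : IsWord w) (k : ℕ) : IsWord (shift k w) := by
  obtain ⟨M, hM⟩ := h; exact ⟨M, fun i => hM _⟩

lemma summable_fword {w : ℕ → ℕ} (hw : IsWord w) {β : ℝ} (hβ : 1 < β) :
    Summable (fun i : ℕ => (w i : ℝ) / β ^ (i + 1)) := by
  obtain ⟨M, hM⟩ := hw
  have hβ0 : (0:ℝ) < β := lt_trans one_pos hβ
  have hr : β⁻¹ < 1 := inv_lt_one_of_one_lt₀ hβ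
  have hr0 : (0:ℝ) ≤ β⁻¹ := by positivity
  have hg : Summable (fun i : ℕ => (M:ℝ) * β⁻¹ ^ (i+1)) := by
    have := ((summable_geometric_of_lt_one hr0 hr).mul_left (M:ℝ))
    exact (summable_nat_add_iff 1).2 this
  apply Summable.of_nonneg_of_le (fun i => by positivity) _ hg
  intro i
  rw [div_eq_mul_inv, ← inv_pow]
  exact mul_le_mul_of_nonneg_right (by exact_mod_cast hM i) (by positivity)

lemma fword_nonneg (w : ℕ → ℕ) {β : ℝ} (hβ : 0 < β) : 0 ≤ fword w β :=
  tsum_nonneg (fun i => by positivity)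

lemma fword_zero_word (β : ℝ) : fword (fun _ => 0) β = 0 := by
  simp [fword]

lemma fword_anti {w : ℕ → ℕ} (hw : IsWord w) {b β : ℝ} (hb : 1 < b) (hbβ : b ≤ β) :
    fword w β ≤ fword w b := by
  have h1 : 1 < β := lt_of_lt_of_le hb hbβ
  have hb0 : (0:ℝ) < b := lt_trans one_pos hb
  refine Summable.tsum_le_tsum (fun i => ?_) (summable_fword hw h1) (summable_fword hw hb)
  have : b ^ (i+1) ≤ β ^ (i+1) := pow_le_pow_left₀ hb0.le hbβ _
  exact div_le_div₀ (by positivity) le_rfl (by positivity) this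

lemma fword_strict_anti {w : ℕ → ℕ} (hne0 : w ≠ fun _ => 0) (hw : IsWord w)
    {b β : ℝ} (hb : 1 < b) (hbβ : b < β) : fword w β < fword w b := by
  obtain ⟨j, hj⟩ := Function.ne_iff.1 hne0
  have h1 : 1 < β := lt_trans hb hbβ
  have hb0 : (0:ℝ) < b := lt_trans one_pos hb
  refine Summable.tsum_lt_tsum (f := fun i : ℕ => (w i : ℝ) / β ^ (i+1)) (i := j) (fun i => ?_) ?_
    (summable_fword hw h1) (summable_fword hw hb)
  · have : b ^ (i+1) ≤ β ^ (i+1) := pow_le_pow_left₀ hb0.le hbβ.le _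
    exact div_le_div₀ (by positivity) le_rfl (by positivity) this
  · have hwj : (0:ℝ) < (w j : ℝ) := by
      have : 0 < w j := Nat.pos_of_ne_zero hj
      exact_mod_cast this
    have hpow : b ^ (j+1) < β ^ (j+1) := pow_lt_pow_left₀ hbβ hb0.le (by omega)
    exact div_lt_div_of_pos_left hwj (by positivity) hpow

lemma exists_mem_S {w : ℕ → ℕ} (hw : IsWord w) : ∃ β : ℝ, 1 < β ∧ fword w β ≤ 1 := by
  obtain ⟨M, hM⟩ := hw
  have hM0 : (0:ℝ) ≤ (M:ℝ) := Nat.cast_nonneg M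
  refine ⟨(M:ℝ) + 2, by linarith, ?_⟩
  set β : ℝ := (M:ℝ) + 2 with hβdef
  have hβ1 : 1 < β := by rw [hβdef]; linarith
  have hβ0 : (0:ℝ) < β := by linarith
  have hr : β⁻¹ < 1 := inv_lt_one_of_one_lt₀ hβ1
  have hr0 : (0:ℝ) ≤ β⁻¹ := by positivity
  have hg : Summable (fun i : ℕ => ((M:ℝ) * β⁻¹) * β⁻¹ ^ i) :=
    (summable_geometric_of_lt_one hr0 hr).mul_left _
  have key : ∑' i : ℕ, ((M:ℝ) * β⁻¹) * β⁻¹ ^ i = ((M:ℝ) * β⁻¹) * (1 - β⁻¹)⁻¹ := by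
    rw [tsum_mul_left, tsum_geometric_of_lt_one hr0 hr]
  have hbound : fword w β ≤ ((M:ℝ) * β⁻¹) * (1 - β⁻¹)⁻¹ := by
    rw [← key]
    refine Summable.tsum_le_tsum (fun i => ?_) (summable_fword ⟨M, hM⟩ hβ1) hg
    rw [div_eq_mul_inv, ← inv_pow, pow_succ', ← mul_assoc]
    refine mul_le_mul_of_nonneg_right ?_ (by positivity)
    exact mul_le_mul_of_nonneg_right (by exact_mod_cast hM i) hr0
  refine le_trans hbound ?_
  have h4 : (M:ℝ) * β⁻¹ ≤ 1 - β⁻¹ := by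
    have h5 : ((M:ℝ) + 1) * β⁻¹ ≤ β * β⁻¹ := by
      refine mul_le_mul_of_nonneg_right ?_ hr0
      rw [hβdef]; linarith
    rw [mul_inv_cancel₀ (ne_of_gt hβ0)] at h5
    nlinarith
  calc ((M:ℝ) * β⁻¹) * (1 - β⁻¹)⁻¹ ≤ (1 - β⁻¹) * (1 - β⁻¹)⁻¹ :=
        mul_le_mul_of_nonneg_right h4 (inv_nonneg.2 (by linarith))
    _ = 1 := mul_inv_cancel₀ (by linarith)

lemma Bhat_eq {w : ℕ → ℕ} (hne0 : w ≠ fun _ => 0) :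
    Bhat w = sInf {β : ℝ | 1 < β ∧ fword w β ≤ 1} := if_neg hne0

lemma one_le_Bhat {w : ℕ → ℕ} (hne0 : w ≠ fun _ => 0) (hw : IsWord w) : 1 ≤ Bhat w := by
  rw [Bhat_eq hne0]
  obtain ⟨β, h1, h2⟩ := exists_mem_S hw
  exact le_csInf ⟨β, h1, h2⟩ (fun b hb => hb.1.le)

lemma fword_lt_one_of_Bhat_lt {w : ℕ → ℕ} (hne0 : w ≠ fun _ => 0) (hw : IsWord w)
    {β : ℝ} (h : Bhat w < β) : fword w β < 1 := by
  rw [Bhat_eq hne0] at h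
  obtain ⟨β0, h10, h20⟩ := exists_mem_S hw
  obtain ⟨b, ⟨hb1, hb2⟩, hbβ⟩ := exists_lt_of_csInf_lt (s := {β : ℝ | 1 < β ∧ fword w β ≤ 1}) ⟨β0, h10, h20⟩ h
  exact lt_of_lt_of_le (fword_strict_anti hne0 hw hb1 hbβ) hb2

lemma one_lt_fword_of_lt_Bhat {w : ℕ → ℕ} (hne0 : w ≠ fun _ => 0)
    {β : ℝ} (h1 : 1 < β) (h2 : β < Bhat w) : 1 < fword w β := by
  rw [Bhat_eq hne0] at h2
  by_contra h
  push_neg at h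
  have : β ∈ {β : ℝ | 1 < β ∧ fword w β ≤ 1} := ⟨h1, h⟩
  exact absurd (csInf_le ⟨1, fun b hb => hb.1.le⟩ this) (not_le.2 h2)

lemma fword_continuousAt {w : ℕ → ℕ} (hw : IsWord w) {β : ℝ} (hβ : 1 < β) :
    ContinuousAt (fword w) β := by
  obtain ⟨M, hM⟩ := hw
  set b : ℝ := (1 + β) / 2 with hbdef
  have hb1 : 1 < b := by rw [hbdef]; linarith
  have hbβ : b < β := by rw [hbdef]; linarith
  have hb0 : (0:ℝ) < b := by linarith
  have hsum : Summable (fun i : ℕ => (M:ℝ) / b ^ (i+1)) :=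
    summable_fword ⟨M, fun _ => le_rfl⟩ hb1
  have huni := tendstoUniformlyOn_tsum hsum
      (f := fun (i : ℕ) (x : ℝ) => (w i : ℝ) / x ^ (i+1)) (s := Set.Ici b) ?_
  · have hco : ContinuousOn (fword w) (Set.Ici b) := by
      have h2 : ContinuousOn (fun x : ℝ => ∑' i : ℕ, (w i : ℝ) / x ^ (i+1)) (Set.Ici b) := by
        refine huni.continuousOn (Filter.Eventually.of_forall fun t => ?_).frequently
        refine continuousOn_finset_sum t (fun i _ => ?_)
        refine ContinuousOn.div continuousOn_const (by fun_prop) (fun x hx => ?_)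
        have hx0 : (0:ℝ) < x := lt_of_lt_of_le hb0 hx
        positivity
      exact h2
    exact hco.continuousAt (Ici_mem_nhds hbβ)
  · intro n x hx
    have hx0 : (0:ℝ) < x := lt_of_lt_of_le hb0 hx
    rw [Real.norm_eq_abs, abs_of_nonneg (by positivity)]
    exact div_le_div₀ (by positivity) (by exact_mod_cast hM n) (by positivity)
      (pow_le_pow_left₀ hb0.le hx _)

lemma fword_le_one_of_Bhat_le {w : ℕ → ℕ} (hw : IsWord w) {β : ℝ}
    (hβ : 1 < β) (h : Bhat w ≤ β) : fword w β ≤ 1 := by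
  by_cases h0 : w = fun _ => 0
  · rw [h0, fword_zero_word]; norm_num
  · have ht : Filter.Tendsto (fword w) (𝓝[>] β) (𝓝 (fword w β)) :=
      (fword_continuousAt hw hβ).tendsto.mono_left nhdsWithin_le_nhds
    refine le_of_tendsto ht ?_
    refine eventually_nhdsWithin_of_forall (fun x hx => ?_)
    exact (fword_lt_one_of_Bhat_lt h0 hw (lt_of_le_of_lt h hx)).le

lemma fword_Bhat_eq_one {w : ℕ → ℕ} (hne0 : w ≠ fun _ => 0) (hw : IsWord w)
    (h : 1 < Bhat w) : fword w (Bhat w) = 1 := by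
  refine le_antisymm (fword_le_one_of_Bhat_le hw h le_rfl) ?_
  have ht : Filter.Tendsto (fword w) (𝓝[<] (Bhat w)) (𝓝 (fword w (Bhat w))) :=
    (fword_continuousAt hw h).tendsto.mono_left nhdsWithin_le_nhds
  refine ge_of_tendsto ht ?_
  have hmem : Set.Ioo 1 (Bhat w) ∈ 𝓝[<] (Bhat w) := Ioo_mem_nhdsLT h
  filter_upwards [hmem] with x hx
  exact (one_lt_fword_of_lt_Bhat hne0 hx.1 hx.2).le

lemma fword_split {w : ℕ → ℕ} (hw : IsWord w) {β : ℝ} (hβ : 1 < β) (k : ℕ) :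
    fword w β = (∑ j ∈ Finset.range k, (w j : ℝ) / β ^ (j+1)) + fword (shift k w) β / β ^ k := by
  have hs := summable_fword hw hβ
  have h := Summable.sum_add_tsum_nat_add k hs
  rw [fword, ← h]
  congr 1
  rw [fword, ← tsum_div_const]
  refine tsum_congr (fun n => ?_)
  show (w (n + k) : ℝ) / β ^ (n + k + 1) = ((shift k w n : ℝ) / β ^ (n+1)) / β ^ k
  rw [show shift k w n = w (n + k) from rfl, div_div, ← pow_add]
  congr 2
  omega

lemma key_ineq {v w : ℕ → ℕ} (hv : IsWord v) (hw : IsWord w) (i : ℕ)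
    (hagree : ∀ j < i, v j = w j) (hwi : w i < v i) {β : ℝ} (hβ : 1 < β) :
    fword w β + (1 - fword (shift (i+1) w) β) / β ^ (i+1) ≤ fword v β := by
  have hβ0 : (0:ℝ) < β := lt_trans one_pos hβ
  have hc : (0:ℝ) < β ^ (i+1) := by positivity
  rw [fword_split hv hβ (i+1), fword_split hw hβ (i+1)]
  have hA : fword (shift (i+1) w) β / β ^ (i+1) + (1 - fword (shift (i+1) w) β) / β ^ (i+1)
      = 1 / β ^ (i+1) := by
    rw [← add_div]; ring_nf
  have hB : 0 ≤ fword (shift (i+1) v) β / β ^ (i+1) :=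
    div_nonneg (fword_nonneg _ hβ0) hc.le
  have hC : (∑ j ∈ Finset.range (i+1), (w j : ℝ) / β ^ (j+1)) + 1 / β ^ (i+1)
      ≤ ∑ j ∈ Finset.range (i+1), (v j : ℝ) / β ^ (j+1) := by
    rw [Finset.sum_range_succ, Finset.sum_range_succ]
    have heq : ∑ j ∈ Finset.range i, (w j : ℝ) / β ^ (j+1)
        = ∑ j ∈ Finset.range i, (v j : ℝ) / β ^ (j+1) := by
      refine Finset.sum_congr rfl (fun j hj => ?_)
      rw [hagree j (Finset.mem_range.1 hj)]
    have hlast : (w i : ℝ) / β ^ (i+1) + 1 / β ^ (i+1) ≤ (v i : ℝ) / β ^ (i+1) := by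
      rw [← add_div]
      refine div_le_div_of_nonneg_right ?_ hc.le
      have : w i + 1 ≤ v i := hwi
      exact_mod_cast this
    linarith
  linarith

lemma exists_fword_gt {v : ℕ → ℕ} (hv : IsWord v) (k : ℕ)
    (h2 : (2:ℝ) ≤ ∑ j ∈ Finset.range k, (v j : ℝ)) :
    ∃ β : ℝ, 1 < β ∧ 1 < fword v β := by
  have ht : Filter.Tendsto (fun x : ℝ => ∑ j ∈ Finset.range k, (v j : ℝ) / x ^ (j+1))
      (𝓝[>] (1:ℝ)) (𝓝 (∑ j ∈ Finset.range k, (v j : ℝ))) := by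
    have h1 : ∀ j ∈ Finset.range k, Filter.Tendsto (fun x : ℝ => (v j : ℝ) / x ^ (j+1))
        (𝓝[>] (1:ℝ)) (𝓝 ((v j : ℝ))) := by
      intro j _
      have hc : ContinuousAt (fun x : ℝ => (v j : ℝ) / x ^ (j+1)) 1 := by
        refine ContinuousAt.div continuousAt_const (by fun_prop) (by norm_num)
      have := hc.tendsto.mono_left (nhdsWithin_le_nhds (s := Set.Ioi (1:ℝ)))
      simpa using this
    exact tendsto_finset_sum _ h1
  have hev : ∀ᶠ x in 𝓝[>] (1:ℝ), 1 < ∑ j ∈ Finset.range k, (v j : ℝ) / x ^ (j+1) :=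
    ht.eventually (eventually_gt_nhds (by linarith))
  have hev2 : ∀ᶠ x in 𝓝[>] (1:ℝ), 1 < x :=
    eventually_nhdsWithin_of_forall (fun x hx => hx)
  obtain ⟨β, hβ1, hβ2⟩ := (hev.and hev2).exists
  refine ⟨β, hβ2, lt_of_lt_of_le hβ1 ?_⟩
  refine Summable.sum_le_tsum (Finset.range k) (fun i _ => ?_) (summable_fword hv hβ2)
  have hβ0 : (0:ℝ) < β := by linarith
  positivity

/-- Let `v > w` lexicographically and let `i` be the least (zero-based) index
with `v i ≠ w i`. If `B̂(v) < B̂(w)` then `B̂(w) < B̂(σ^{i+1} w)`; likewise, if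
`B̂(v) ≤ B̂(w)` then `B̂(w) ≤ B̂(σ^{i+1} w)`. -/
theorem stmt_17 (v w : ℕ → ℕ) (hv : IsWord v) (hw : IsWord w)
    (hgt : LexLt w v) (i : ℕ) (hagree : ∀ j < i, v j = w j) (hne : v i ≠ w i) :
    (Bhat v < Bhat w → Bhat w < Bhat (shift (i + 1) w)) ∧
      (Bhat v ≤ Bhat w → Bhat w ≤ Bhat (shift (i + 1) w)) := by
  obtain ⟨k, hk1, hk2⟩ := hgt
  have hwi : w i < v i := by
    rcases lt_trichotomy k i with h | h | h
    · exact absurd (hagree k h).symm (ne_of_lt hk2)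
    · exact h ▸ hk2
    · exact absurd (hk1 i h).symm hne
  have hu : IsWord (shift (i+1) w) := isWord_shift hw (i+1)
  have hv0 : v ≠ fun _ => 0 := by
    intro h
    have : v i = 0 := by rw [h]
    omega
  have h1v : 1 ≤ Bhat v := one_le_Bhat hv0 hv
  constructor
  · intro hlt
    have hw0 : w ≠ fun _ => 0 := by
      intro h
      have hz : Bhat w = 0 := by simp [Bhat, h]
      rw [hz] at hlt; linarith
    have hβ1 : 1 < Bhat w := lt_of_le_of_lt h1v hlt
    have hβ0 : (0:ℝ) < Bhat w := by linarith
    have hfw : fword w (Bhat w) = 1 := fword_Bhat_eq_one hw0 hw hβ1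
    have hfv : fword v (Bhat w) < 1 := fword_lt_one_of_Bhat_lt hv0 hv hlt
    have hki := key_ineq hv hw i hagree hwi hβ1
    have hc : (0:ℝ) < (Bhat w) ^ (i+1) := by positivity
    have hfu : 1 < fword (shift (i+1) w) (Bhat w) := by
      by_contra h
      push_neg at h
      have h2 : 0 ≤ (1 - fword (shift (i+1) w) (Bhat w)) / (Bhat w) ^ (i+1) :=
        div_nonneg (by linarith) hc.le
      linarith
    have hu0 : shift (i+1) w ≠ fun _ => 0 := by
      intro h
      rw [h, fword_zero_word] at hfu
      linarith
    by_contra hle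
    push_neg at hle
    have := fword_le_one_of_Bhat_le hu hβ1 hle
    linarith
  · intro hle
    have hw0 : w ≠ fun _ => 0 := by
      intro h
      have hz : Bhat w = 0 := by simp [Bhat, h]
      rw [hz] at hle; linarith
    have h1w : 1 ≤ Bhat w := one_le_Bhat hw0 hw
    rcases eq_or_lt_of_le h1w with heq | hβ1
    · rw [← heq]
      by_cases hu0 : shift (i+1) w = fun _ => 0
      · exfalso
        obtain ⟨m, hm⟩ := Function.ne_iff.1 hw0
        have hmi : m ≤ i := by
          by_contra h
          push_neg at h
          have h2 : shift (i+1) w (m - (i+1)) = 0 := by rw [hu0]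
          have h3 : shift (i+1) w (m - (i+1)) = w m := by
            show w (m - (i+1) + (i+1)) = w m
            congr 1
            omega
          exact hm (h3 ▸ h2)
        have hsum2 : (2:ℝ) ≤ ∑ j ∈ Finset.range (i+1), (v j : ℝ) := by
          have hstep : ∑ j ∈ Finset.range (i+1), (w j : ℝ) + 1
              ≤ ∑ j ∈ Finset.range (i+1), (v j : ℝ) := by
            rw [Finset.sum_range_succ, Finset.sum_range_succ]
            have heq2 : ∑ j ∈ Finset.range i, (w j : ℝ)
                = ∑ j ∈ Finset.range i, (v j : ℝ) := by
              refine Finset.sum_congr rfl (fun j hj => ?_)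
              rw [hagree j (Finset.mem_range.1 hj)]
            have : (w i : ℝ) + 1 ≤ (v i : ℝ) := by exact_mod_cast hwi
            linarith
          have h1' : (1:ℝ) ≤ ∑ j ∈ Finset.range (i+1), (w j : ℝ) := by
            have hm1 : (1:ℝ) ≤ (w m : ℝ) := by
              have : 1 ≤ w m := Nat.one_le_iff_ne_zero.2 hm
              exact_mod_cast this
            refine le_trans hm1 ?_
            exact Finset.single_le_sum (f := fun j => (w j : ℝ))
              (fun j _ => by positivity) (Finset.mem_range.2 (by omega))
          linarith
        obtain ⟨β, hβ, hfv⟩ := exists_fword_gt hv (i+1) hsum2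
        have hbv : Bhat v ≤ β := by rw [← heq] at hle; linarith
        have := fword_le_one_of_Bhat_le hv hβ hbv
        linarith
      · exact one_le_Bhat hu0 hu
    · have hβ0 : (0:ℝ) < Bhat w := by linarith
      have hfw : fword w (Bhat w) = 1 := fword_Bhat_eq_one hw0 hw hβ1
      have hfv : fword v (Bhat w) ≤ 1 := fword_le_one_of_Bhat_le hv hβ1 hle
      have hki := key_ineq hv hw i hagree hwi hβ1
      have hc : (0:ℝ) < (Bhat w) ^ (i+1) := by positivity
      have hfu : 1 ≤ fword (shift (i+1) w) (Bhat w) := by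
        by_contra h
        push_neg at h
        have h2 : 0 < (1 - fword (shift (i+1) w) (Bhat w)) / (Bhat w) ^ (i+1) :=
          div_pos (by linarith) hc
        linarith
      have hu0 : shift (i+1) w ≠ fun _ => 0 := by
        intro h
        rw [h, fword_zero_word] at hfu
        linarith
      by_contra hgt2
      push_neg at hgt2
      have := fword_lt_one_of_Bhat_lt hu0 hu hgt2
      linarith
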